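/- arXiv:2112.14424 — 2 statements merged into one kernel-verified Lean document; each statement's English description precedes it below -/
import Mathlib

section
/- If a POVM {M_i}_{i=1}^n achieves q_G(E) = max over POVMs of ∑_i η_i Tr(ρ_i^PT M_i) for a bipartite ensemble E = {(η_i, ρ_i)}, then M_i (η_i ρ_i^PT − η_j ρ_j^PT) M_j = 0 for all i, j. -/
open Matrix ComplexOrder

noncomputable section

abbrev Op (d₁ d₂ : ℕ) := Matrix (Fin d₁ × Fin d₂) (Fin d₁ × Fin d₂) ℂ

/-- Partial transpose with respect to the second tensor factor. -/
def PT {d₁ d₂ : ℕ} (M : Op d₁ d₂) : Op d₁ d₂ :=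
  Matrix.of fun p q => M (p.1, q.2) (q.1, p.2)

/-- A POVM: positive semidefinite operators summing to the identity. -/
def IsPOVM {n d₁ d₂ : ℕ} (M : Fin n → Op d₁ d₂) : Prop :=
  (∀ i, (M i).PosSemidef) ∧ ∑ i, M i = 1

/-- A PPT POVM: a POVM whose elements all have positive semidefinite
partial transpose. -/
def IsPPTPOVM {n d₁ d₂ : ℕ} (M : Fin n → Op d₁ d₂) : Prop :=
  IsPOVM M ∧ ∀ i, (PT (M i)).PosSemidef

/-- Success probability ∑ i, η i Tr(ρ i M i) of discriminating the ensemble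
{(η i, ρ i)} with the measurement {M i}. -/
def ensVal {n d₁ d₂ : ℕ} (η : Fin n → ℝ) (ρ M : Fin n → Op d₁ d₂) : ℝ :=
  ∑ i, η i * ((ρ i * M i).trace).re

/-- The ensemble conditions: probabilities η and density operators ρ. -/
def IsEnsemble {n d₁ d₂ : ℕ} (η : Fin n → ℝ) (ρ : Fin n → Op d₁ d₂) : Prop :=
  (∀ i, 0 ≤ η i) ∧ ∑ i, η i = 1 ∧ ∀ i, (ρ i).PosSemidef ∧ (ρ i).trace = 1

/-! ### Auxiliary lemmas -/

/-- The partial transpose of a Hermitian matrix is Hermitian. -/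
lemma PT_isHermitian_aux {d₁ d₂ : ℕ} {M : Op d₁ d₂} (h : M.IsHermitian) :
    (PT M).IsHermitian := by
  ext p q
  simp only [conjTranspose_apply, PT, of_apply]
  simpa [conjTranspose_apply] using congrFun (congrFun h (p.1, q.2)) (q.1, p.2)

/-- Scaling a PSD matrix by a nonnegative real keeps it PSD. -/
lemma smul_psd_aux {m : Type*} [Fintype m] (c : ℝ) (hc : 0 ≤ c) {A : Matrix m m ℂ}
    (hA : A.PosSemidef) : ((c : ℂ) • A).PosSemidef := by
  constructor
  · unfold Matrix.IsHermitian
    rw [conjTranspose_smul, hA.1.eq]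
    simp [Complex.conj_ofReal]
  · intro x
    exact (hA.smul (a := (c:ℂ)) (by exact_mod_cast hc)).2 x

lemma trace_mul_stdBasisMatrix_aux {m : Type*} [Fintype m] [DecidableEq m] (A : Matrix m m ℂ)
    (p q : m) : (A * Matrix.single p q (1:ℂ)).trace = A q p := by
  rw [Matrix.trace]
  rw [Finset.sum_eq_single q]
  · simp
  · intro k _ hk
    exact mul_single_apply_of_ne (c := (1:ℂ)) p q k k hk A
  · simp

lemma one_sub_std_psd_aux {m : Type*} [Fintype m] [DecidableEq m] (q : m) :
    ((1 : Matrix m m ℂ) - Matrix.single q q (1:ℂ)).PosSemidef := by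
  have : (1 : Matrix m m ℂ) - Matrix.single q q (1:ℂ)
      = diagonal (fun r => if q = r then 0 else 1) := by
    ext r s
    by_cases h : r = s
    · subst h; by_cases hq : q = r <;> simp [Matrix.single, diagonal, hq]
    · have : ¬ (q = r ∧ q = s) := by rintro ⟨rfl, rfl⟩; exact h rfl
      simp [Matrix.single, diagonal, h, this, Ne.symm h]
  rw [this]
  refine posSemidef_diagonal_iff.mpr fun r => ?_
  by_cases hq : q = r <;> simp [hq]

lemma stdBasisMatrix_conjT_aux {m : Type*} [Fintype m] [DecidableEq m] (p q : m) :
    (Matrix.single p q (1:ℂ))ᴴ = Matrix.single q p (1:ℂ) := by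
  ext a b
  by_cases h1 : q = a <;> by_cases h2 : p = b <;>
    simp [Matrix.single, conjTranspose_apply, h1, h2]

lemma sin_quad_nonpos_aux (a b : ℝ)
    (h : ∀ t : ℝ, Real.sin t ^ 2 * a + Real.sin t * Real.cos t * b ≤ 0) : b ≤ 0 := by
  by_contra hb
  push_neg at hb
  set f : ℝ → ℝ := fun t => a * Real.sin t + b * Real.cos t with hf
  have hcont : Continuous f := by fun_prop
  have hf0 : f 0 = b := by simp [hf]
  have hev : ∀ᶠ t in nhds 0, 0 < f t := by
    have h1 := hcont.continuousAt (x := (0:ℝ))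
    have h2 : Filter.Tendsto f (nhds 0) (nhds b) := hf0 ▸ h1
    exact h2.eventually_const_lt hb
  obtain ⟨δ, hδ, hδf⟩ := Metric.eventually_nhds_iff.mp hev
  set t : ℝ := min (δ/2) 1 with ht
  have ht0 : 0 < t := lt_min (by linarith) one_pos
  have htδ : dist t 0 < δ := by
    rw [Real.dist_eq, sub_zero, abs_of_pos ht0]
    exact lt_of_le_of_lt (min_le_left _ _) (by linarith)
  have hsin : 0 < Real.sin t :=
    Real.sin_pos_of_pos_of_lt_pi ht0 (lt_of_le_of_lt (min_le_right _ _)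
      (by linarith [Real.pi_gt_three]))
  have hft : 0 < f t := hδf htδ
  have h3 := h t
  simp only [hf] at hft
  nlinarith [mul_pos hsin hft]

lemma sin_quad_zero_aux (a b : ℝ)
    (h : ∀ t : ℝ, Real.sin t ^ 2 * a + Real.sin t * Real.cos t * b ≤ 0) : b = 0 := by
  have h1 : b ≤ 0 := sin_quad_nonpos_aux a b h
  have h2 : -b ≤ 0 := by
    apply sin_quad_nonpos_aux a
    intro t
    have := h (-t)
    simpa [mul_comm, mul_assoc, mul_left_comm] using this
  linarith

theorem offdiag_cond_of_qG_optimal {n d₁ d₂ : ℕ} (η : Fin n → ℝ) (ρ : Fin n → Op d₁ d₂)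
    (hE : IsEnsemble η ρ) (M : Fin n → Op d₁ d₂) (hM : IsPOVM M)
    (hopt : ∀ N, IsPOVM N →
      ensVal η (fun i => PT (ρ i)) N ≤ ensVal η (fun i => PT (ρ i)) M) :
    ∀ i j, M i * ((η i : ℂ) • PT (ρ i) - (η j : ℂ) • PT (ρ j)) * M j = 0 := by
  intro i j
  rcases eq_or_ne i j with rfl | hij
  · simp
  obtain ⟨hMpsd, hMsum⟩ := hM
  have hρi : (ρ i).IsHermitian := (hE.2.2 i).1.1
  have hρj : (ρ j).IsHermitian := (hE.2.2 j).1.1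
  set Δ : Op d₁ d₂ := (η i : ℂ) • PT (ρ i) - (η j : ℂ) • PT (ρ j) with hΔdef
  have hΔH : Δᴴ = Δ := by
    rw [hΔdef, conjTranspose_sub, conjTranspose_smul, conjTranspose_smul,
      (PT_isHermitian_aux hρi).eq, (PT_isHermitian_aux hρj).eq]
    simp [Complex.star_def, Complex.conj_ofReal]
  have hMi := hMpsd i
  have hMj := hMpsd j
  open scoped MatrixOrder in
  set R := CFC.sqrt (M i) with hRdef
  open scoped MatrixOrder in
  set T := CFC.sqrt (M j) with hTdef
  open scoped MatrixOrder in
  have hRH : Rᴴ = R := (CFC.sqrt_nonneg (M i)).posSemidef.1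
  open scoped MatrixOrder in
  have hTH : Tᴴ = T := (CFC.sqrt_nonneg (M j)).posSemidef.1
  open scoped MatrixOrder in
  have hRR : R * R = M i := CFC.sqrt_mul_sqrt_self (M i) hMi.nonneg
  open scoped MatrixOrder in
  have hTT : T * T = M j := CFC.sqrt_mul_sqrt_self (M j) hMj.nonneg
  -- the key variational fact
  have key : ∀ (p q : Fin d₁ × Fin d₂) (z : ℂ), star z * z = 1 →
      (z * ((T * Δ * R) q p)).re = 0 := by
    intro p q z hz
    have hz' : z * star z = 1 := by rw [mul_comm]; exact hz
    set X : Op d₁ d₂ := z • Matrix.single p q (1:ℂ) with hXdef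
    set P : Op d₁ d₂ := R * X * T + T * Xᴴ * R with hPdef
    have hXX : Xᴴ * X = Matrix.single q q (1:ℂ) := by
      rw [hXdef, conjTranspose_smul, smul_mul_assoc, mul_smul_comm, smul_smul,
        Complex.star_def]
      rw [show (starRingEnd ℂ) z * z = 1 from hz, one_smul,
        stdBasisMatrix_conjT_aux, single_mul_single_same, one_mul]
    have hXXH : X * Xᴴ = Matrix.single p p (1:ℂ) := by
      rw [hXdef, conjTranspose_smul, smul_mul_assoc, mul_smul_comm, smul_smul,
        Complex.star_def]
      rw [show z * (starRingEnd ℂ) z = 1 from hz', one_smul,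
        stdBasisMatrix_conjT_aux, single_mul_single_same, one_mul]
    -- the variational inequality for each t
    have main : ∀ t : ℝ, Real.sin t ^ 2 * ((Δ * (M j - M i)).trace).re
        + Real.sin t * Real.cos t * ((Δ * P).trace).re ≤ 0 := by
      intro t
      set s := Real.sin t with hsdef
      set c := Real.cos t with hcdef
      have h0 : s ^ 2 + c ^ 2 = 1 := Real.sin_sq_add_cos_sq t
      have hsc : (c:ℂ) * c = 1 - (s:ℂ) * s := by
        have h1 : (s:ℂ)^2 + (c:ℂ)^2 = 1 := by exact_mod_cast h0
        linear_combination h1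
      set D : Op d₁ d₂ := ((s^2 : ℝ) : ℂ) • (M j - M i) + ((s*c : ℝ) : ℂ) • P with hDdef
      set N : Fin n → Op d₁ d₂ :=
        fun k => M k + ((if k = i then D else 0) + (if k = j then -D else 0)) with hNdef
      have hNi : N i = M i + D := by simp [hNdef, hij]
      have hNj : N j = M j + -D := by simp [hNdef, Ne.symm hij]
      have hNsum : ∑ k, N k = 1 := by
        simp only [hNdef, Finset.sum_add_distrib, hMsum, Finset.sum_ite_eq',
          Finset.mem_univ, if_true]
        simp
      have hNpsd : ∀ k, (N k).PosSemidef := by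
        intro k
        rcases eq_or_ne k i with rfl | hki
        · rw [hNi]
          have hform : M k + D =
              ((c:ℂ) • R + (s:ℂ) • (X * T))ᴴ * ((c:ℂ) • R + (s:ℂ) • (X * T))
                + ((s^2 : ℝ) : ℂ) • (Tᴴ * ((1 : Op d₁ d₂) - Xᴴ * X) * T) := by
            rw [hDdef, hPdef]
            simp only [conjTranspose_add, conjTranspose_smul, conjTranspose_mul, hRH, hTH,
              Complex.star_def, Complex.conj_ofReal, add_mul, mul_add, smul_mul_assoc,
              mul_smul_comm, smul_smul, Matrix.mul_assoc, Matrix.mul_one, mul_one, sub_mul,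
              mul_sub, smul_sub, hRR, hTT]
            push_cast
            match_scalars <;>
              first | linear_combination -hsc | linear_combination -2 * hsc | ring
          rw [hform]
          refine (posSemidef_conjTranspose_mul_self _).add
            (smul_psd_aux _ (sq_nonneg s) ?_)
          rw [hXX]
          exact (one_sub_std_psd_aux q).conjTranspose_mul_mul_same T
        rcases eq_or_ne k j with rfl | hkj
        · rw [hNj]
          have hform : M k + -D =
              ((c:ℂ) • T - (s:ℂ) • (Xᴴ * R))ᴴ * ((c:ℂ) • T - (s:ℂ) • (Xᴴ * R))
                + ((s^2 : ℝ) : ℂ) • (Rᴴ * ((1 : Op d₁ d₂) - X * Xᴴ) * R) := by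
            rw [hDdef, hPdef]
            simp only [conjTranspose_sub, conjTranspose_smul, conjTranspose_mul,
              conjTranspose_conjTranspose, hRH, hTH,
              Complex.star_def, Complex.conj_ofReal, add_mul, mul_add, sub_mul, mul_sub,
              smul_mul_assoc, mul_smul_comm, smul_smul, Matrix.mul_assoc, Matrix.mul_one,
              mul_one, smul_sub, smul_add, neg_add, neg_smul, neg_sub, hRR, hTT]
            push_cast
            match_scalars <;>
              first | linear_combination -hsc | linear_combination -2 * hsc | ring
          rw [hform]
          refine (posSemidef_conjTranspose_mul_self _).add
            (smul_psd_aux _ (sq_nonneg s) ?_)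
          rw [hXXH]
          exact (one_sub_std_psd_aux p).conjTranspose_mul_mul_same R
        · have : N k = M k := by simp [hNdef, hki, hkj]
          rw [this]; exact hMpsd k
      have hle := hopt N ⟨hNpsd, hNsum⟩
      -- compute the value difference
      have hterm : ∀ k, η k * ((PT (ρ k) * N k).trace).re
          = η k * ((PT (ρ k) * M k).trace).re
            + ((if k = i then η i * ((PT (ρ i) * D).trace).re else 0)
              + (if k = j then -(η j * ((PT (ρ j) * D).trace).re) else 0)) := by
        intro k
        rcases eq_or_ne k i with rfl | hki
        · rw [hNi]
          simp [mul_add, Matrix.mul_add, trace_add, hij, mul_comm]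
        rcases eq_or_ne k j with rfl | hkj
        · rw [hNj]
          simp [Ne.symm hij, hki, Matrix.mul_add, trace_add, Matrix.mul_neg, trace_neg,
            mul_add, mul_neg]
        · have : N k = M k := by simp [hNdef, hki, hkj]
          simp [this, hki, hkj]
      have hval : ensVal η (fun i => PT (ρ i)) N = ensVal η (fun i => PT (ρ i)) M
          + (η i * ((PT (ρ i) * D).trace).re - η j * ((PT (ρ j) * D).trace).re) := by
        simp only [ensVal, hterm, Finset.sum_add_distrib, Finset.sum_ite_eq',
          Finset.mem_univ, if_true]
        ring
      have hineq : η i * ((PT (ρ i) * D).trace).re - η j * ((PT (ρ j) * D).trace).re ≤ 0 := by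
        rw [hval] at hle; linarith
      -- rewrite as a trace against Δ
      have htr : ((Δ * D).trace).re
          = η i * ((PT (ρ i) * D).trace).re - η j * ((PT (ρ j) * D).trace).re := by
        rw [hΔdef, sub_mul, trace_sub, smul_mul_assoc, smul_mul_assoc, trace_smul, trace_smul]
        simp [Complex.sub_re, smul_eq_mul, Complex.re_ofReal_mul]
      have hDexp : ((Δ * D).trace).re
          = s ^ 2 * ((Δ * (M j - M i)).trace).re + s * c * ((Δ * P).trace).re := by
        rw [hDdef, Matrix.mul_add, trace_add, mul_smul_comm, mul_smul_comm,
          trace_smul, trace_smul]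
        simp only [smul_eq_mul, Complex.add_re, Complex.re_ofReal_mul]
      rw [← htr, hDexp] at hineq
      exact hineq
    -- conclude the trace term vanishes
    have hb : ((Δ * P).trace).re = 0 :=
      sin_quad_zero_aux _ _ main
    -- compute the trace explicitly
    have e1 : (Δ * (R * (Matrix.single p q (1:ℂ)) * T)).trace = (T * Δ * R) q p := by
      rw [show Δ * (R * Matrix.single p q (1:ℂ) * T)
            = (Δ * R * Matrix.single p q (1:ℂ)) * T by noncomm_ring, trace_mul_comm,
        show T * (Δ * R * Matrix.single p q (1:ℂ))
            = (T * Δ * R) * Matrix.single p q (1:ℂ) by noncomm_ring,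
        trace_mul_stdBasisMatrix_aux]
    have e2 : (Δ * (T * (Matrix.single q p (1:ℂ)) * R)).trace = (R * Δ * T) p q := by
      rw [show Δ * (T * Matrix.single q p (1:ℂ) * R)
            = (Δ * T * Matrix.single q p (1:ℂ)) * R by noncomm_ring, trace_mul_comm,
        show R * (Δ * T * Matrix.single q p (1:ℂ))
            = (R * Δ * T) * Matrix.single q p (1:ℂ) by noncomm_ring,
        trace_mul_stdBasisMatrix_aux]
    have hadj : (R * Δ * T) p q = star ((T * Δ * R) q p) := by
      have hc : R * Δ * T = (T * Δ * R)ᴴ := by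
        rw [conjTranspose_mul, conjTranspose_mul, hΔH, hRH, hTH, ← Matrix.mul_assoc]
      rw [hc, conjTranspose_apply]
    have htrace : (Δ * P).trace = z * ((T * Δ * R) q p) + star (z * ((T * Δ * R) q p)) := by
      rw [hPdef, Matrix.mul_add, trace_add]
      have h1 : Δ * (R * X * T) = z • (Δ * (R * Matrix.single p q (1:ℂ) * T)) := by
        rw [hXdef]
        simp only [smul_mul_assoc, mul_smul_comm]
      have h2 : Δ * (T * Xᴴ * R)
          = star z • (Δ * (T * Matrix.single q p (1:ℂ) * R)) := by
        rw [hXdef, conjTranspose_smul, stdBasisMatrix_conjT_aux]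
        simp only [smul_mul_assoc, mul_smul_comm]
      rw [h1, h2, trace_smul, trace_smul, smul_eq_mul, smul_eq_mul, e1, e2, hadj, star_mul']
    rw [htrace] at hb
    have h2re : (z * ((T * Δ * R) q p) + star (z * ((T * Δ * R) q p))).re
        = 2 * (z * ((T * Δ * R) q p)).re := by
      simp [Complex.add_re, Complex.star_def, Complex.conj_re]
      ring
    rw [h2re] at hb
    linarith
  -- conclude T * Δ * R = 0
  have hTΔR : T * Δ * R = 0 := by
    ext a b
    have h1 := key b a 1 (by simp)
    have h2 := key b a Complex.I (by simp [Complex.star_def])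
    rw [one_mul] at h1
    rw [Complex.I_mul_re] at h2
    simp only [Matrix.zero_apply]
    exact Complex.ext (by simp [h1]) (by simp; linarith)
  have hMji : M j * Δ * M i = 0 := by
    rw [← hRR, ← hTT, show T * T * Δ * (R * R) = T * (T * Δ * R) * R by noncomm_ring,
      hTΔR, Matrix.mul_zero, Matrix.zero_mul]
  calc M i * Δ * M j = (M j * Δ * M i)ᴴ := by
        rw [conjTranspose_mul, conjTranspose_mul, hΔH, hMi.1.eq, hMj.1.eq, ← Matrix.mul_assoc]
    _ = 0 := by rw [hMji, conjTranspose_zero]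
end
end

section
/- If a POVM {M_i}_{i=1}^n satisfies ∑_j η_j ρ_j M_j − η_i ρ_i ⪰ 0 for all i (for an ensemble {(η_i, ρ_i)}), then {M_i} achieves the guessing probability p_G(E) = max over POVMs of ∑_i η_i Tr(ρ_i M_i). -/
open Matrix ComplexOrder

noncomputable section

private lemma psd_trace_nonneg {ι : Type*} [Fintype ι] [DecidableEq ι] {A : Matrix ι ι ℂ}
    (hA : A.PosSemidef) : 0 ≤ A.trace := by
  rw [Matrix.trace]
  apply Finset.sum_nonneg
  intro i _
  exact hA.diag_nonneg

open scoped MatrixOrder in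
private lemma psd_mul_trace_nonneg {ι : Type*} [Fintype ι] [DecidableEq ι]
    {A B : Matrix ι ι ℂ} (hA : A.PosSemidef) (hB : B.PosSemidef) :
    0 ≤ (A * B).trace := by
  have h1 : A * B = CFC.sqrt A * (CFC.sqrt A * B) := by
    rw [← mul_assoc, CFC.sqrt_mul_sqrt_self A hA.nonneg]
  rw [h1, Matrix.trace_mul_comm]
  have h2 : CFC.sqrt A * B * CFC.sqrt A = (CFC.sqrt A)ᴴ * B * CFC.sqrt A := by
    rw [(CFC.sqrt_nonneg A).posSemidef.isHermitian.eq]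
  rw [mul_assoc, ← mul_assoc, h2]
  exact psd_trace_nonneg (hB.conjTranspose_mul_mul_same (CFC.sqrt A))

theorem guessing_optimal_of_cond {n : ℕ} {ι : Type*} [Fintype ι] [DecidableEq ι]
    (η : Fin n → ℝ) (ρ : Fin n → Matrix ι ι ℂ)
    (hη : ∀ i, 0 ≤ η i) (hηsum : ∑ i, η i = 1)
    (hρ : ∀ i, (ρ i).PosSemidef ∧ (ρ i).trace = 1)
    (M : Fin n → Matrix ι ι ℂ)
    (hMpsd : ∀ i, (M i).PosSemidef) (hMsum : ∑ i, M i = 1)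
    (hcond : ∀ i, (∑ j, (η j : ℂ) • (ρ j * M j) - (η i : ℂ) • ρ i).PosSemidef) :
    ∀ N : Fin n → Matrix ι ι ℂ, (∀ i, (N i).PosSemidef) → ∑ i, N i = 1 →
      ∑ i, η i * ((ρ i * N i).trace).re ≤ ∑ i, η i * ((ρ i * M i).trace).re := by
  intro N hNpsd hNsum
  set Y : Matrix ι ι ℂ := ∑ j, (η j : ℂ) • (ρ j * M j) with hY
  have key : ∀ i, η i * ((ρ i * N i).trace).re ≤ ((Y * N i).trace).re := by
    intro i
    have h := psd_mul_trace_nonneg (hcond i) (hNpsd i)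
    have heq : ((Y - (η i : ℂ) • ρ i) * N i).trace
        = (Y * N i).trace - (η i : ℂ) * ((ρ i * N i).trace) := by
      simp [sub_mul, Matrix.smul_mul, Matrix.trace_sub, Matrix.trace_smul, smul_eq_mul]
    rw [heq] at h
    have hre := (Complex.le_def.mp h).1
    simp only [Complex.zero_re, Complex.sub_re, Complex.mul_re, Complex.ofReal_re,
      Complex.ofReal_im] at hre
    linarith
  calc ∑ i, η i * ((ρ i * N i).trace).re
      ≤ ∑ i, ((Y * N i).trace).re := Finset.sum_le_sum fun i _ => key i
    _ = (Y.trace).re := by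
        rw [← Complex.re_sum]
        congr 1
        rw [← Matrix.trace_sum]
        congr 1
        rw [← Finset.mul_sum, hNsum, mul_one]
    _ = ∑ i, η i * ((ρ i * M i).trace).re := by
        rw [hY, Matrix.trace_sum, Complex.re_sum]
        congr 1
        ext j
        rw [Matrix.trace_smul]
        simp [Complex.mul_re]
end
end
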